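/- General monotonicity: let k ≥ 2 and let μ_k, μ_{k+1} satisfy (k+1)/k ≤ μ_{k+1} ≤ μ_k, k/(k−1) ≤ μ_k < 2, and 1/(μ_{k+1}−1) − 1/(μ_k−1) ≤ 1. Then opt(IP(k, μ_k)) ≥ opt(IP(k+1, μ_{k+1})). -/
import Mathlib


/-- cost of an integer solution to IP(k, μ). -/
noncomputable def IPcost (k : ℕ) (z : ℕ → ℕ) : ℝ :=
  ∑ j ∈ Finset.Icc 1 (k - 1), (z j : ℝ) / ((j : ℝ) + 1)

/-- objective value of an integer solution to IP(k, μ). -/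
noncomputable def IPscore (k : ℕ) (μ : ℝ) (z : ℕ → ℕ) : ℝ :=
  μ + ∑ j ∈ Finset.Icc 1 (k - 1), (z j : ℝ) * (1 / (j : ℝ) - μ / ((j : ℝ) + 1))

/-- optimum of IP(k, μ). -/
noncomputable def IPopt (k : ℕ) (μ : ℝ) : ℝ :=
  sSup {s | ∃ z : ℕ → ℕ, IPcost k z < 1 ∧ s = IPscore k μ z}

lemma IPcost_nonneg (k : ℕ) (z : ℕ → ℕ) : 0 ≤ IPcost k z := by
  apply Finset.sum_nonneg
  intro j hj
  have : (1:ℕ) ≤ j := (Finset.mem_Icc.mp hj).1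
  positivity

lemma IPscore_le_two (k : ℕ) (μ : ℝ) (z : ℕ → ℕ) (hμ : μ < 2)
    (hc : IPcost k z < 1) : IPscore k μ z ≤ 2 := by
  have key : ∑ j ∈ Finset.Icc 1 (k - 1), (z j : ℝ) * (1 / (j : ℝ) - μ / ((j : ℝ) + 1))
      ≤ (2 - μ) * IPcost k z := by
    rw [IPcost, Finset.mul_sum]
    apply Finset.sum_le_sum
    intro j hj
    have hj1 : (1:ℕ) ≤ j := (Finset.mem_Icc.mp hj).1
    have hjr : (1:ℝ) ≤ (j:ℝ) := by exact_mod_cast hj1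
    have hjp : (0:ℝ) < (j:ℝ) := by linarith
    have hz : (0:ℝ) ≤ (z j : ℝ) := by positivity
    have h12 : (1:ℝ) / (j:ℝ) ≤ 2 / ((j:ℝ) + 1) := by
      rw [div_le_div_iff₀ hjp (by linarith)]
      linarith
    have : (1:ℝ) / (j:ℝ) - μ / ((j:ℝ) + 1) ≤ (2 - μ) / ((j:ℝ) + 1) := by
      rw [sub_div]
      linarith
    calc (z j : ℝ) * (1 / (j : ℝ) - μ / ((j : ℝ) + 1))
        ≤ (z j : ℝ) * ((2 - μ) / ((j:ℝ) + 1)) := by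
          exact mul_le_mul_of_nonneg_left this hz
      _ = (2 - μ) * ((z j : ℝ) / ((j:ℝ) + 1)) := by ring
  have h0 : 0 ≤ IPcost k z := IPcost_nonneg k z
  have : (2 - μ) * IPcost k z ≤ (2 - μ) * 1 :=
    mul_le_mul_of_nonneg_left (le_of_lt hc) (by linarith)
  rw [IPscore]
  linarith

lemma IP_key (k : ℕ) (μk μk1 : ℝ) (hk : 2 ≤ k)
    (h1 : ((k : ℝ) + 1) / (k : ℝ) ≤ μk1) (h2 : μk1 ≤ μk)
    (z : ℕ → ℕ) (hc : IPcost (k + 1) z < 1) :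
    IPcost k z < 1 ∧ IPscore (k + 1) μk1 z ≤ IPscore k μk z := by
  obtain ⟨m, rfl⟩ : ∃ m, k = m + 2 := ⟨k - 2, by omega⟩
  have hkr : (0:ℝ) < ((m:ℝ) + 2) := by positivity
  -- split the top term off the (k+1) sums
  have hIcc : m + 2 + 1 - 1 = (m + 1) + 1 := by omega
  have hsplitc : IPcost (m + 2 + 1) z
      = IPcost (m + 2) z + (z (m + 2) : ℝ) / ((m : ℝ) + 2 + 1) := by
    rw [IPcost, IPcost, hIcc, Finset.sum_Icc_succ_top (by omega : (1:ℕ) ≤ m + 1 + 1)]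
    have h11 : m + 1 + 1 = m + 2 := rfl
    rw [h11]
    norm_num
  have hsplits : IPscore (m + 2 + 1) μk1 z
      = μk1 + (∑ j ∈ Finset.Icc 1 (m + 2 - 1), (z j : ℝ) * (1 / (j : ℝ) - μk1 / ((j : ℝ) + 1)))
        + (z (m + 2) : ℝ) * (1 / ((m:ℝ) + 2) - μk1 / ((m : ℝ) + 2 + 1)) := by
    rw [IPscore, hIcc, Finset.sum_Icc_succ_top (by omega : (1:ℕ) ≤ m + 1 + 1)]
    have h11 : m + 1 + 1 = m + 2 := rfl
    rw [h11]
    have : (m + 2 : ℕ) - 1 = m + 1 := by omega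
    rw [this]
    push_cast
    ring
  have hc0 : 0 ≤ IPcost (m + 2) z := IPcost_nonneg _ z
  have hz0 : (0:ℝ) ≤ (z (m + 2) : ℝ) := by positivity
  have htop0 : (0:ℝ) ≤ (z (m + 2) : ℝ) / ((m : ℝ) + 2 + 1) := by positivity
  have hcost : IPcost (m + 2) z < 1 := by
    rw [hsplitc] at hc; linarith
  refine ⟨hcost, ?_⟩
  -- top coefficient is nonpositive
  have h1' : (m:ℝ) + 2 + 1 ≤ μk1 * ((m:ℝ) + 2) := by
    have := (div_le_iff₀ hkr).mp (by push_cast at h1 ⊢; linarith : (((m:ℝ)+2) + 1) / ((m:ℝ)+2) ≤ μk1)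
    linarith
  have htopc : (1:ℝ) / ((m:ℝ) + 2) - μk1 / ((m : ℝ) + 2 + 1) ≤ 0 := by
    rw [sub_nonpos, div_le_div_iff₀ hkr (by positivity)]
    linarith
  have htop : (z (m + 2) : ℝ) * (1 / ((m:ℝ) + 2) - μk1 / ((m : ℝ) + 2 + 1)) ≤ 0 :=
    mul_nonpos_of_nonneg_of_nonpos hz0 htopc
  -- compare the sums for μk1 and μk
  have hsumdiff : (∑ j ∈ Finset.Icc 1 (m + 2 - 1), (z j : ℝ) * (1 / (j : ℝ) - μk1 / ((j : ℝ) + 1)))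
      - (∑ j ∈ Finset.Icc 1 (m + 2 - 1), (z j : ℝ) * (1 / (j : ℝ) - μk / ((j : ℝ) + 1)))
      = (μk - μk1) * IPcost (m + 2) z := by
    rw [IPcost, Finset.mul_sum, ← Finset.sum_sub_distrib]
    apply Finset.sum_congr rfl
    intro j hj
    ring
  have hm : (μk - μk1) * IPcost (m + 2) z ≤ (μk - μk1) * 1 :=
    mul_le_mul_of_nonneg_left (le_of_lt hcost) (by linarith)
  rw [hsplits, IPscore]
  linarith

theorem IP_general_monotonicity (k : ℕ) (μk μk1 : ℝ) (hk : 2 ≤ k)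
    (h1 : ((k : ℝ) + 1) / (k : ℝ) ≤ μk1) (h2 : μk1 ≤ μk)
    (h3 : (k : ℝ) / ((k : ℝ) - 1) ≤ μk) (h4 : μk < 2)
    (h5 : 1 / (μk1 - 1) - 1 / (μk - 1) ≤ 1) :
    IPopt (k + 1) μk1 ≤ IPopt k μk := by
  rw [IPopt, IPopt]
  have hbdd : BddAbove {s | ∃ z : ℕ → ℕ, IPcost k z < 1 ∧ s = IPscore k μk z} := by
    refine ⟨2, ?_⟩
    rintro s ⟨z, hz, rfl⟩
    exact IPscore_le_two k μk z h4 hz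
  have hne : {s | ∃ z : ℕ → ℕ, IPcost (k + 1) z < 1 ∧ s = IPscore (k + 1) μk1 z}.Nonempty := by
    refine ⟨IPscore (k + 1) μk1 0, 0, ?_, rfl⟩
    simp [IPcost]
  apply csSup_le hne
  rintro s ⟨z, hz, rfl⟩
  obtain ⟨hcost, hle⟩ := IP_key k μk μk1 hk h1 h2 z hz
  exact le_trans hle (le_csSup hbdd ⟨z, hcost, rfl⟩)
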